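/- The number of maximal chains in the lattice of set partitions of an (n+1)-element set, ordered by refinement, equals (n+1)! · n! / 2^n. -/

import Mathlib

section PairSetoid
variable {α : Type*}

instance setoidFinite [Finite α] : Finite (Setoid α) :=
  Finite.of_injective (fun s : Setoid α => ⇑s) fun _ _ h =>
    Setoid.ext fun x y => iff_of_eq (congrFun (congrFun h x) y)

def pairSetoid (i j : α) : Setoid α where
  r x y := x = y ∨ (x = i ∧ y = j) ∨ (x = j ∧ y = i)
  iseqv := by
    constructor
    · intro x; exact Or.inl rfl
    · rintro x y (rfl | ⟨rfl, rfl⟩ | ⟨rfl, rfl⟩) <;> tauto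
    · rintro x y z (rfl | ⟨rfl, rfl⟩ | ⟨rfl, rfl⟩) h2 <;>
        rcases h2 with rfl | ⟨h2a, rfl⟩ | ⟨h2a, rfl⟩ <;> tauto

lemma pairSetoid_rel {i j x y : α} :
    pairSetoid i j x y ↔ (x = y ∨ (x = i ∧ y = j) ∨ (x = j ∧ y = i)) := Iff.rfl

lemma pairSetoid_comm (i j : α) : pairSetoid i j = pairSetoid j i :=
  Setoid.ext fun x y => by rw [pairSetoid_rel, pairSetoid_rel]; tauto

lemma pairSetoid_ne_bot {i j : α} (h : i ≠ j) : pairSetoid i j ≠ ⊥ := by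
  intro hb
  have : pairSetoid i j i j := Or.inr (Or.inl ⟨rfl, rfl⟩)
  rw [hb] at this
  have : i = j := this
  exact h this

lemma isAtom_pairSetoid {i j : α} (h : i ≠ j) : IsAtom (pairSetoid i j) := by
  refine ⟨pairSetoid_ne_bot h, fun b hb => ?_⟩
  by_contra hbne
  obtain ⟨x, y, hxy, hne⟩ : ∃ x y, b x y ∧ x ≠ y := by
    by_contra hc
    push_neg at hc
    exact hbne (Setoid.ext fun x y =>
      ⟨fun hxy => by_contra fun hne => (hne (hc x y hxy)), fun hxy => hxy ▸ b.refl x⟩)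
  have hxy' : pairSetoid i j x y := hb.le hxy
  have hbij : b i j := by
    rcases hxy' with rfl | ⟨rfl, rfl⟩ | ⟨rfl, rfl⟩
    · exact absurd rfl hne
    · exact hxy
    · exact b.symm hxy
  have : pairSetoid i j ≤ b := by
    intro u v huv
    rcases huv with rfl | ⟨rfl, rfl⟩ | ⟨rfl, rfl⟩
    · exact b.refl u
    · exact hbij
    · exact b.symm hbij
  exact hb.ne (le_antisymm hb.le this)

lemma eq_pairSetoid_of_isAtom {a : Setoid α} (ha : IsAtom a) :
    ∃ i j, i ≠ j ∧ a = pairSetoid i j := by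
  obtain ⟨i, j, hij, hrel⟩ : ∃ i j, i ≠ j ∧ a i j := by
    by_contra hc
    push_neg at hc
    exact ha.1 (Setoid.ext fun x y =>
      ⟨fun hxy => by_contra fun hne => hne (by_contra fun h' => h' ((hc x y h').elim hxy)),
       fun hxy => hxy ▸ a.refl x⟩)
  refine ⟨i, j, hij, ?_⟩
  have hle : pairSetoid i j ≤ a := by
    intro u v huv
    rcases huv with rfl | ⟨rfl, rfl⟩ | ⟨rfl, rfl⟩
    · exact a.refl u
    · exact hrel
    · exact a.symm hrel
  rcases hle.lt_or_eq with hlt | heq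
  · exact absurd (ha.2 _ hlt) (pairSetoid_ne_bot hij)
  · exact heq.symm


section More
variable {α β : Type*}

noncomputable def pairQuotEquiv {i j : α} (h : i ≠ j) :
    {x : α // x ≠ j} ≃ Quotient (pairSetoid i j) := by
  refine Equiv.ofBijective (fun x => Quotient.mk _ x.1) ⟨?_, ?_⟩
  · rintro ⟨x, hx⟩ ⟨y, hy⟩ hxy
    rcases pairSetoid_rel.mp (Quotient.exact hxy) with h' | ⟨h1, h2⟩ | ⟨h1, h2⟩
    · exact Subtype.ext h'
    · exact absurd h2 hy
    · exact absurd h1 hx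
  · rintro q
    induction q using Quotient.inductionOn with
    | h y =>
      by_cases hy : y = j
      · subst hy
        exact ⟨⟨i, h⟩, Quotient.sound (pairSetoid_rel.mpr (Or.inr (Or.inl ⟨rfl, rfl⟩)))⟩
      · exact ⟨⟨y, hy⟩, rfl⟩

def sym2ToSetoid : Sym2 α → Setoid α :=
  Sym2.lift ⟨fun i j => pairSetoid i j, fun i j => pairSetoid_comm i j⟩

lemma isAtom_sym2ToSetoid : ∀ (p : Sym2 α), ¬p.IsDiag → IsAtom (sym2ToSetoid p) := by
  intro p
  induction p using Sym2.ind with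
  | _ i j =>
    intro hd
    rw [Sym2.mk_isDiag_iff] at hd
    exact isAtom_pairSetoid hd

noncomputable def atomEquiv :
    {p : Sym2 α // ¬p.IsDiag} ≃ {a : Setoid α // IsAtom a} := by
  refine Equiv.ofBijective (fun p => ⟨sym2ToSetoid p.1, isAtom_sym2ToSetoid p.1 p.2⟩) ⟨?_, ?_⟩
  · rintro ⟨p, hp⟩ ⟨q, hq⟩ h
    have h' : sym2ToSetoid p = sym2ToSetoid q := congrArg Subtype.val h
    refine Subtype.ext ?_
    induction p using Sym2.ind with
    | _ i j =>
      induction q using Sym2.ind with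
      | _ k l =>
        rw [Sym2.mk_isDiag_iff] at hp hq
        have hpair : pairSetoid i j = pairSetoid k l := h'
        have hkl : pairSetoid k l i j := by
          rw [← hpair]; exact pairSetoid_rel.mpr (Or.inr (Or.inl ⟨rfl, rfl⟩))
        rcases pairSetoid_rel.mp hkl with h'' | ⟨h1, h2⟩ | ⟨h1, h2⟩
        · exact absurd h'' hp
        · rw [Sym2.eq_iff]; exact Or.inl ⟨h1, h2⟩
        · rw [Sym2.eq_iff]; exact Or.inr ⟨h1, h2⟩
  · rintro ⟨a, ha⟩
    obtain ⟨i, j, hij, rfl⟩ := eq_pairSetoid_of_isAtom ha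
    exact ⟨⟨s(i, j), by rwa [Sym2.mk_isDiag_iff]⟩, rfl⟩

def setoidCongr (e : α ≃ β) : Setoid α ≃o Setoid β where
  toFun s := Setoid.comap e.symm s
  invFun t := Setoid.comap e t
  left_inv s := Setoid.ext fun x y => by
    rw [Setoid.comap_rel, Setoid.comap_rel, e.symm_apply_apply, e.symm_apply_apply]
  right_inv t := Setoid.ext fun x y => by
    rw [Setoid.comap_rel, Setoid.comap_rel, e.apply_symm_apply, e.apply_symm_apply]
  map_rel_iff' := by
    intro s t
    constructor
    · intro h x y hxy
      have := @h (e x) (e y) (by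
        show Setoid.comap e.symm s (e x) (e y)
        rwa [Setoid.comap_rel, e.symm_apply_apply, e.symm_apply_apply])
      change Setoid.comap e.symm t (e x) (e y) at this
      rwa [Setoid.comap_rel, e.symm_apply_apply, e.symm_apply_apply] at this
    · intro h x y hxy
      rw [Setoid.comap_rel] at hxy ⊢
      exact h hxy

end More
section D
variable {L : Type*} [PartialOrder L] [BoundedOrder L]

lemma flag_mem_eq_bot_or_le {a : L} (ha : IsAtom a) {F : Flag L} (haF : a ∈ F)
    {x : L} (hx : x ∈ F) : x = ⊥ ∨ a ≤ x := by
  rcases F.le_or_le hx haF with h | h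
  · rcases h.lt_or_eq with h' | h'
    · exact Or.inl (ha.2 x h')
    · exact Or.inr h'.ge
  · exact Or.inr h

lemma atom_mem_unique {a b : L} (ha : IsAtom a) (hb : IsAtom b) {F : Flag L}
    (haF : a ∈ F) (hbF : b ∈ F) : a = b := by
  rcases flag_mem_eq_bot_or_le ha haF hbF with h | h
  · exact absurd h hb.1
  · rcases flag_mem_eq_bot_or_le hb hbF haF with h' | h'
    · exact absurd h' ha.1
    · exact le_antisymm h h'

lemma exists_atom_mem [Finite L] (hbt : (⊥ : L) ≠ ⊤) (F : Flag L) :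
    ∃ a, IsAtom a ∧ a ∈ F := by
  have hS : ({x | x ∈ F ∧ x ≠ ⊥} : Set L).Finite := Set.toFinite _
  obtain ⟨a, ⟨haF, hane⟩, hmin⟩ : ∃ a ∈ ({x | x ∈ F ∧ x ≠ ⊥} : Set L),
      ∀ a' ∈ ({x | x ∈ F ∧ x ≠ ⊥} : Set L), id a' ≤ id a → id a = id a' := by
    obtain ⟨a, ha, h⟩ := Set.Finite.exists_minimalFor id _ hS ⟨⊤, F.top_mem, Ne.symm hbt⟩
    exact ⟨a, ha, fun a' ha' hle => le_antisymm (h ha' hle) hle⟩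
  refine ⟨a, ⟨hane, fun b hba => ?_⟩, haF⟩
  by_contra hbne
  have hbF : b ∈ F := by
    rw [Flag.mem_iff_forall_le_or_ge]
    intro c hc
    rcases F.le_or_le hc haF with h | h
    · by_cases hcb : c = ⊥
      · exact Or.inr (hcb ▸ bot_le)
      · have : a = c := hmin c ⟨hc, hcb⟩ h
        exact Or.inl (this ▸ hba.le)
    · exact Or.inl (hba.le.trans h)
  have : a = b := hmin b ⟨hbF, hbne⟩ hba.le
  exact hba.ne this.symm

def flagFiberEquiv {a : L} (ha : IsAtom a) :
    {F : Flag L // a ∈ F} ≃ Flag {x : L // a ≤ x} where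
  toFun := fun ⟨F, hF⟩ => Flag.ofIsMaxChain {x : {x : L // a ≤ x} | x.1 ∈ F}
    ⟨fun x hx y hy hne => by
      rcases F.le_or_le hx hy with h | h
      · exact Or.inl (Subtype.coe_le_coe.mp h)
      · exact Or.inr (Subtype.coe_le_coe.mp h),
     fun t ht hsub => by
      refine Set.Subset.antisymm hsub fun y hy => ?_
      show y.1 ∈ F
      rw [Flag.mem_iff_forall_le_or_ge]
      intro c hc
      rcases flag_mem_eq_bot_or_le ha hF hc with rfl | hac
      · exact Or.inr bot_le
      · have hcC : (⟨c, hac⟩ : {x : L // a ≤ x}) ∈ t := hsub hc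
        rcases ht.total hy hcC with h | h
        · exact Or.inl h
        · exact Or.inr h⟩
  invFun := fun C => ⟨Flag.ofIsMaxChain (insert ⊥ (Subtype.val '' (C : Set {x : L // a ≤ x})))
    ⟨fun x hx y hy hne => by
      rcases hx with rfl | ⟨x', hx', rfl⟩
      · exact Or.inl bot_le
      · rcases hy with rfl | ⟨y', hy', rfl⟩
        · exact Or.inr bot_le
        · rcases C.le_or_le hx' hy' with h | h
          · exact Or.inl h
          · exact Or.inr h,
     fun t ht hsub => by
      have haC : (⟨a, le_rfl⟩ : {x : L // a ≤ x}) ∈ C := by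
        rw [Flag.mem_iff_forall_le_or_ge]
        intro b hb
        exact Or.inl b.2
      have hat : a ∈ t := hsub (Set.mem_insert_of_mem _ ⟨_, haC, rfl⟩)
      refine Set.Subset.antisymm hsub fun y hy => ?_
      by_cases hyb : y = ⊥
      · exact hyb ▸ Set.mem_insert _ _
      · have hay : a ≤ y := by
          rcases ht.total hat hy with h | h
          · exact h
          · rcases h.lt_or_eq with h' | h'
            · exact absurd (ha.2 y h') hyb
            · exact h'.ge
        have : (⟨y, hay⟩ : {x : L // a ≤ x}) ∈ C := by
          rw [Flag.mem_iff_forall_le_or_ge]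
          intro b hb
          have hbt : b.1 ∈ t := hsub (Set.mem_insert_of_mem _ ⟨_, hb, rfl⟩)
          rcases ht.total hy hbt with h | h
          · exact Or.inl h
          · exact Or.inr h
        exact Set.mem_insert_of_mem _ ⟨_, this, rfl⟩⟩,
    Set.mem_insert_of_mem _ ⟨⟨a, le_rfl⟩, by
      rw [Flag.mem_coe_iff, Flag.mem_iff_forall_le_or_ge]
      exact fun b hb => Or.inl b.2, rfl⟩⟩
  left_inv := fun ⟨F, hF⟩ => by
    refine Subtype.ext (Flag.ext ?_)
    simp only [Flag.coe_ofIsMaxChain]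
    ext x
    constructor
    · rintro (rfl | ⟨x', hx', rfl⟩)
      · exact F.bot_mem
      · exact hx'
    · intro hx
      rcases flag_mem_eq_bot_or_le ha hF hx with rfl | hax
      · exact Set.mem_insert _ _
      · exact Set.mem_insert_of_mem _ ⟨⟨x, hax⟩, hx, rfl⟩
  right_inv := fun C => by
    refine Flag.ext ?_
    simp only [Flag.coe_ofIsMaxChain]
    ext x
    constructor
    · rintro (hx | ⟨x', hx', hval⟩)
      · exact absurd (le_bot_iff.mp (hx ▸ x.2)) ha.1
      · exact (Subtype.val_injective hval) ▸ hx'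
    · intro hx
      exact Set.mem_insert_of_mem _ ⟨x, hx, rfl⟩

noncomputable def flagSigmaEquiv [Finite L] (hbt : (⊥ : L) ≠ ⊤) :
    Flag L ≃ Σ a : {a : L // IsAtom a}, Flag {x : L // a.1 ≤ x} := by
  refine (Equiv.sigmaFiberEquiv (fun F : Flag L =>
      (⟨(exists_atom_mem hbt F).choose, (exists_atom_mem hbt F).choose_spec.1⟩ :
        {a : L // IsAtom a}))).symm.trans (Equiv.sigmaCongrRight fun a => ?_)
  refine (Equiv.subtypeEquivRight fun F => ?_).trans (flagFiberEquiv a.2)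
  constructor
  · rintro rfl
    exact (exists_atom_mem hbt F).choose_spec.2
  · intro haF
    exact Subtype.ext (atom_mem_unique (exists_atom_mem hbt F).choose_spec.1 a.2
      (exists_atom_mem hbt F).choose_spec.2 haF)

lemma card_flag_one : Nat.card (Flag (Setoid (Fin 1))) = 1 := by
  have hsub : Subsingleton (Setoid (Fin 1)) := ⟨fun a b => Setoid.ext fun x y => by
    have hxy : x = y := Subsingleton.elim x y
    subst hxy
    exact iff_of_true (a.refl x) (b.refl x)⟩
  have hchain : ∀ s : Set (Setoid (Fin 1)), IsChain (· ≤ ·) s :=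
    fun s x _ y _ hxy => absurd (Subsingleton.elim x y) hxy
  have hne : Nonempty (Flag (Setoid (Fin 1))) :=
    ⟨Flag.ofIsMaxChain _ (maxChain_spec (r := (· ≤ ·)))⟩
  have hfsub : Subsingleton (Flag (Setoid (Fin 1))) := ⟨fun F G => Flag.ext
    ((F.max_chain' (hchain Set.univ) (Set.subset_univ _)).trans
      (G.max_chain' (hchain Set.univ) (Set.subset_univ _)).symm)⟩
  exact Nat.card_eq_one_iff_unique.mpr ⟨hfsub, hne⟩

lemma card_atoms_test (m : ℕ) (A : ℕ) (hA : A = (m+1).choose 2) : 2 * A = (m+1) * m := by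
  rw [hA, Nat.choose_two_right]
  have h2 : 2 ∣ (m+1) * m := by
    have := Nat.even_mul_succ_self m
    rw [mul_comm] at this
    exact this.two_dvd
  simpa using Nat.mul_div_cancel' h2


noncomputable def atomQuotEquiv {m : ℕ} {a : Setoid (Fin (m+1))} (ha : IsAtom a) :
    Quotient a ≃ Fin m :=
  (Equiv.cast (congrArg Quotient
      (eq_pairSetoid_of_isAtom ha).choose_spec.choose_spec.2)).trans
    (((pairQuotEquiv (eq_pairSetoid_of_isAtom ha).choose_spec.choose_spec.1).symm).trans
      (finSuccAboveEquiv _).symm)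

noncomputable def flagStepEquiv (m : ℕ) :
    Flag (Setoid (Fin (m+2))) ≃
      {a : Setoid (Fin (m+2)) // IsAtom a} × Flag (Setoid (Fin (m+1))) := by
  have hbt : (⊥ : Setoid (Fin (m+2))) ≠ ⊤ := by
    intro h
    have h01 : (⊥ : Setoid (Fin (m+2))) 0 1 := by
      rw [h, Setoid.top_def]; trivial
    rw [Setoid.bot_def] at h01
    exact absurd h01 (by simp)
  exact (flagSigmaEquiv hbt).trans ((Equiv.sigmaCongrRight fun a =>
    Flag.map ((Setoid.correspondence a.1).trans (setoidCongr (atomQuotEquiv a.2)))).trans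
    (Equiv.sigmaEquivProd _ _))

lemma card_atoms (m : ℕ) :
    2 * Nat.card {a : Setoid (Fin (m+1)) // IsAtom a} = (m+1) * m := by
  rw [← Nat.card_congr (atomEquiv (α := Fin (m+1))), Nat.card_eq_fintype_card,
    Sym2.card_subtype_not_diag, Fintype.card_fin, Nat.choose_two_right]
  have h2 : 2 ∣ (m+1) * m := by
    have := Nat.even_mul_succ_self m
    rw [mul_comm] at this
    exact this.two_dvd
  simpa using Nat.mul_div_cancel' h2

/-- The number of maximal chains (flags) in the lattice of set partitions of an
`(n+1)`-element set, ordered by refinement (partitions are encoded as setoids,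
i.e. equivalence relations), equals `(n+1)! n! / 2^n`. -/
theorem stmt_12 (n : ℕ) :
    2 ^ n * Nat.card (Flag (Setoid (Fin (n + 1)))) =
      Nat.factorial (n + 1) * Nat.factorial n := by
  induction n with
  | zero => simp [card_flag_one]
  | succ n ih =>
    rw [Nat.card_congr (flagStepEquiv n), Nat.card_prod]
    have h2 : 2 * Nat.card {a : Setoid (Fin (n+2)) // IsAtom a} = (n+2) * (n+1) :=
      card_atoms (n+1)
    rw [Nat.factorial_succ (n+1), Nat.factorial_succ n]
    calc 2^(n+1) * (Nat.card {a : Setoid (Fin (n+2)) // IsAtom a} *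
          Nat.card (Flag (Setoid (Fin (n+1)))))
        = (2 * Nat.card {a : Setoid (Fin (n+2)) // IsAtom a}) *
          (2^n * Nat.card (Flag (Setoid (Fin (n+1))))) := by ring
      _ = ((n+2) * (n+1)) * (Nat.factorial (n+1) * Nat.factorial n) := by rw [h2, ih]
      _ = (n+2) * Nat.factorial (n+1) * ((n+1) * Nat.factorial n) := by ring
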